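/- Let G = (V,E) be a finite simple undirected graph with m edges and maximum degree at most 2, and let 0 < p ≤ 1/2. Let (X_e)_{e∈E} be pairwise independent {0,1}-valued random variables with Pr[X_e = 1] = p for every e ∈ E. Then the random edge set M(X) is always a matching of G, and E[|M(X)|] ≥ (1 − 2p)·p·m; in particular, for p = 1/4 one has E[|M(X)|] ≥ m/8. -/

import Mathlib

open MeasureTheory

open scoped Classical in
/-- For a 0-1 assignment `x` on the edges, `matchSet G x` is the set of edges `e` of `G` with
`x e = 1` and `x e' = 0` for every edge `e' ≠ e` sharing an endpoint with `e`. -/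
noncomputable def matchSet {V : Type*} [Fintype V] [DecidableEq V]
    (G : SimpleGraph V) [DecidableRel G.Adj] (x : Sym2 V → ℝ) : Finset (Sym2 V) :=
  G.edgeFinset.filter (fun e => x e = 1 ∧
    ∀ e' ∈ G.edgeFinset, e' ≠ e → (∃ v, v ∈ e ∧ v ∈ e') → x e' = 0)

open scoped Classical in
private lemma nbr_card_le {V : Type*} [Fintype V] [DecidableEq V]
    (G : SimpleGraph V) [DecidableRel G.Adj] (hdeg : ∀ v, G.degree v ≤ 2)
    (e : Sym2 V) (he : e ∈ G.edgeFinset) :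
    (G.edgeFinset.filter (fun e' => e' ≠ e ∧ ∃ v, v ∈ e ∧ v ∈ e')).card ≤ 2 := by
  induction e using Sym2.ind with
  | _ u v =>
    have hmemu : s(u, v) ∈ G.incidenceFinset u := by
      rw [SimpleGraph.mem_incidenceFinset]
      exact ⟨SimpleGraph.mem_edgeFinset.1 he, Sym2.mem_mk_left u v⟩
    have hmemv : s(u, v) ∈ G.incidenceFinset v := by
      rw [SimpleGraph.mem_incidenceFinset]
      exact ⟨SimpleGraph.mem_edgeFinset.1 he, Sym2.mem_mk_right u v⟩
    have hsub : G.edgeFinset.filter (fun e' => e' ≠ s(u, v) ∧ ∃ w, w ∈ s(u, v) ∧ w ∈ e')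
        ⊆ (G.incidenceFinset u).erase s(u, v) ∪ (G.incidenceFinset v).erase s(u, v) := by
      intro e' he'
      simp only [Finset.mem_filter] at he'
      obtain ⟨hE', hne, w, hw, hwe'⟩ := he'
      rw [Sym2.mem_iff] at hw
      rcases hw with rfl | rfl
      · exact Finset.mem_union_left _ (Finset.mem_erase.2 ⟨hne, by
          rw [SimpleGraph.mem_incidenceFinset]
          exact ⟨SimpleGraph.mem_edgeFinset.1 hE', hwe'⟩⟩)
      · exact Finset.mem_union_right _ (Finset.mem_erase.2 ⟨hne, by
          rw [SimpleGraph.mem_incidenceFinset]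
          exact ⟨SimpleGraph.mem_edgeFinset.1 hE', hwe'⟩⟩)
    calc (G.edgeFinset.filter (fun e' => e' ≠ s(u, v) ∧ ∃ w, w ∈ s(u, v) ∧ w ∈ e')).card
        ≤ ((G.incidenceFinset u).erase s(u, v) ∪ (G.incidenceFinset v).erase s(u, v)).card :=
          Finset.card_le_card hsub
      _ ≤ ((G.incidenceFinset u).erase s(u, v)).card +
          ((G.incidenceFinset v).erase s(u, v)).card := Finset.card_union_le _ _
      _ = (G.degree u - 1) + (G.degree v - 1) := by
          rw [Finset.card_erase_of_mem hmemu, Finset.card_erase_of_mem hmemv,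
            SimpleGraph.card_incidenceFinset_eq_degree, SimpleGraph.card_incidenceFinset_eq_degree]
      _ ≤ 1 + 1 := by
          have := hdeg u; have := hdeg v; omega
      _ = 2 := rfl

/-- In a graph of maximum degree at most 2 with `m` edges, for pairwise independent 0-1 edge
variables with success probability `p ≤ 1/2`, `M(X)` is always a matching and
`E[|M(X)|] ≥ (1 − 2p)·p·m`; in particular for `p = 1/4`, `E[|M(X)|] ≥ m/8`. -/
theorem matching_via_pairwise_independence
    {V : Type*} [Fintype V] [DecidableEq V]
    (G : SimpleGraph V) [DecidableRel G.Adj]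
    (hdeg : ∀ v, G.degree v ≤ 2)
    {Ω : Type*} [MeasureSpace Ω] [IsProbabilityMeasure (volume : Measure Ω)]
    (p : ℝ) (hp0 : 0 < p) (hp1 : p ≤ 1 / 2)
    (X : Sym2 V → Ω → ℝ) (hmeas : ∀ e, Measurable (X e))
    (h01 : ∀ e ω, X e ω = 0 ∨ X e ω = 1)
    (hprob : ∀ e ∈ G.edgeFinset, (volume {ω | X e ω = 1}).toReal = p)
    (hpind : ∀ e ∈ G.edgeFinset, ∀ e' ∈ G.edgeFinset, e ≠ e' →
      ProbabilityTheory.IndepFun (X e) (X e') volume) :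
    (∀ ω : Ω, ∀ e ∈ matchSet G (fun e => X e ω), ∀ e' ∈ matchSet G (fun e => X e ω),
      e ≠ e' → ∀ v, ¬(v ∈ e ∧ v ∈ e')) ∧
    (1 - 2 * p) * p * (G.edgeFinset.card : ℝ) ≤
      (∫ ω, ((matchSet G (fun e => X e ω)).card : ℝ)) ∧
    (p = 1 / 4 → (G.edgeFinset.card : ℝ) / 8 ≤
      (∫ ω, ((matchSet G (fun e => X e ω)).card : ℝ))) := by
  classical
  have part1 : ∀ ω : Ω, ∀ e ∈ matchSet G (fun e => X e ω), ∀ e' ∈ matchSet G (fun e => X e ω),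
      e ≠ e' → ∀ v, ¬(v ∈ e ∧ v ∈ e') := by
    intro ω e he e' he' hne v hv
    simp only [matchSet, Finset.mem_filter] at he he'
    have h0 : X e' ω = 0 := he.2.2 e' he'.1 (fun h => hne h.symm) ⟨v, hv.1, hv.2⟩
    have h1 : X e' ω = 1 := he'.2.1
    rw [h0] at h1
    exact one_ne_zero h1.symm
  -- neighbor finset and events
  set N : Sym2 V → Finset (Sym2 V) := fun e =>
    G.edgeFinset.filter (fun e' => e' ≠ e ∧ ∃ v, v ∈ e ∧ v ∈ e') with hN
  set A : Sym2 V → Set Ω := fun e =>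
    {ω | X e ω = 1 ∧ ∀ e' ∈ G.edgeFinset, e' ≠ e → (∃ v, v ∈ e ∧ v ∈ e') → X e' ω = 0} with hA
  have hAeq : ∀ e, A e = (X e ⁻¹' {1}) ∩ ⋂ e' ∈ N e, X e' ⁻¹' {0} := by
    intro e; ext ω
    simp only [hA, hN, Set.mem_setOf_eq, Set.mem_inter_iff, Set.mem_preimage,
      Set.mem_singleton_iff, Set.mem_iInter, Finset.mem_filter]
    aesop
  have hAmeas : ∀ e, MeasurableSet (A e) := by
    intro e
    rw [hAeq]
    exact ((hmeas e) (measurableSet_singleton 1)).inter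
      (MeasurableSet.biInter (Finset.countable_toSet _)
        (fun e' _ => (hmeas e') (measurableSet_singleton 0)))
  have hcard : ∀ ω : Ω, ((matchSet G (fun e => X e ω)).card : ℝ)
      = ∑ e ∈ G.edgeFinset, (A e).indicator (fun _ => (1 : ℝ)) ω := by
    intro ω
    have hmeq : matchSet G (fun e => X e ω) = G.edgeFinset.filter (fun e => ω ∈ A e) := by
      ext e
      simp only [matchSet, Finset.mem_filter, hA, Set.mem_setOf_eq]
    rw [hmeq, Finset.card_filter]
    push_cast
    refine Finset.sum_congr rfl (fun e _ => ?_)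
    by_cases h : ω ∈ A e <;> simp [h]
  have hint : ∀ e : Sym2 V, Integrable ((A e).indicator (fun _ => (1 : ℝ))) volume :=
    fun e => (integrable_const 1).indicator (hAmeas e)
  have hI : (∫ ω, ((matchSet G (fun e => X e ω)).card : ℝ))
      = ∑ e ∈ G.edgeFinset, (volume (A e)).toReal := by
    simp_rw [hcard]
    rw [integral_finset_sum _ (fun e _ => hint e)]
    refine Finset.sum_congr rfl (fun e _ => ?_)
    rw [integral_indicator_const (1 : ℝ) (hAmeas e), smul_eq_mul, mul_one]
    rfl
  have hbound : ∀ e ∈ G.edgeFinset, (1 - 2 * p) * p ≤ (volume (A e)).toReal := by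
    intro e he
    have hsub : (X e ⁻¹' {1}) ⊆ A e ∪ ⋃ e' ∈ N e, (X e ⁻¹' {1} ∩ X e' ⁻¹' {1}) := by
      intro ω hω
      by_cases h : ∀ e' ∈ N e, X e' ω = 0
      · left
        rw [hAeq]
        exact ⟨hω, Set.mem_iInter₂.2 fun e' h' => h e' h'⟩
      · right
        push_neg at h
        obtain ⟨e', he', hne⟩ := h
        have h1 : X e' ω = 1 := (h01 e' ω).resolve_left hne
        exact Set.mem_biUnion he' ⟨hω, h1⟩
    have h1 : volume (X e ⁻¹' {1}) ≤
        volume (A e) + ∑ e' ∈ N e, volume (X e ⁻¹' {1} ∩ X e' ⁻¹' {1}) :=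
      le_trans (measure_mono hsub) (le_trans (measure_union_le _ _)
        (add_le_add le_rfl (measure_biUnion_finset_le _ _)))
    have hne_top : volume (A e) + ∑ e' ∈ N e, volume (X e ⁻¹' {1} ∩ X e' ⁻¹' {1}) ≠ ⊤ := by
      refine ENNReal.add_ne_top.2 ⟨measure_ne_top _ _, ?_⟩
      exact (ENNReal.sum_lt_top.2 fun e' _ => measure_lt_top _ _).ne
    have h2 : p ≤ (volume (A e)).toReal +
        ∑ e' ∈ N e, (volume (X e ⁻¹' {1} ∩ X e' ⁻¹' {1})).toReal := by
      have := ENNReal.toReal_mono hne_top h1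
      rwa [ENNReal.toReal_add (measure_ne_top _ _)
        ((ENNReal.sum_lt_top.2 fun e' _ => measure_lt_top _ _).ne),
        ENNReal.toReal_sum (fun e' _ => measure_ne_top _ _),
        show (X e ⁻¹' {1} : Set Ω) = {ω | X e ω = 1} from rfl, hprob e he] at this
    have hterm : ∀ e' ∈ N e, (volume (X e ⁻¹' {1} ∩ X e' ⁻¹' {1})).toReal = p * p := by
      intro e' he'
      simp only [hN, Finset.mem_filter] at he'
      have hind := hpind e he e' he'.1 (fun h => he'.2.1 h.symm)
      rw [hind.measure_inter_preimage_eq_mul _ _ (measurableSet_singleton 1)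
        (measurableSet_singleton 1), ENNReal.toReal_mul,
        show (X e ⁻¹' {1} : Set Ω) = {ω | X e ω = 1} from rfl,
        show (X e' ⁻¹' {1} : Set Ω) = {ω | X e' ω = 1} from rfl,
        hprob e he, hprob e' he'.1]
    have hsum : ∑ e' ∈ N e, (volume (X e ⁻¹' {1} ∩ X e' ⁻¹' {1})).toReal
        = (N e).card * (p * p) := by
      rw [Finset.sum_congr rfl hterm, Finset.sum_const, nsmul_eq_mul]
    have hNcard : (N e).card ≤ 2 := nbr_card_le G hdeg e he
    have hNcard' : ((N e).card : ℝ) ≤ 2 := by exact_mod_cast hNcard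
    have hpp : 0 ≤ p * p := le_of_lt (mul_pos hp0 hp0)
    rw [hsum] at h2
    nlinarith [mul_le_mul_of_nonneg_right hNcard' hpp]
  have part2 : (1 - 2 * p) * p * (G.edgeFinset.card : ℝ) ≤
      (∫ ω, ((matchSet G (fun e => X e ω)).card : ℝ)) := by
    rw [hI]
    calc (1 - 2 * p) * p * (G.edgeFinset.card : ℝ)
        = ∑ _e ∈ G.edgeFinset, (1 - 2 * p) * p := by
          rw [Finset.sum_const, nsmul_eq_mul, mul_comm]
      _ ≤ ∑ e ∈ G.edgeFinset, (volume (A e)).toReal := Finset.sum_le_sum hbound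
  refine ⟨part1, part2, fun hp => ?_⟩
  have := part2
  rw [hp] at this
  linarith
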